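/- Let L₁,…,L_m be bounded operators on a Banach space with ‖Lⱼ‖ ≤ Λ for all j, and let S₂(λ) = (∏_{j=1}^m e^{(λ/2) Lⱼ})(∏_{j=m}^1 e^{(λ/2) Lⱼ}). Then ‖e^{λ Σⱼ Lⱼ} − S₂(λ)‖ ≤ C (m Λ |λ|)³ e^{m Λ |λ|} for an absolute constant C; in particular the symmetric Trotter splitting has local error of third order in λ. -/

import Mathlib

open NormedSpace

variable {A : Type*} [NormedRing A] [NormedAlgebra ℂ A] [CompleteSpace A]

lemma real_exp_tail (x : ℝ) (N : ℕ) :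
    Real.exp x - ∑ n ∈ Finset.range N, x ^ n / n.factorial
      = ∑' n : ℕ, x ^ (n + N) / (n + N).factorial := by
  have hs : Summable (fun n : ℕ => x ^ n / n.factorial) := Real.summable_pow_div_factorial x
  have h := Summable.sum_add_tsum_nat_add N hs
  have hexp : Real.exp x = ∑' n : ℕ, x ^ n / n.factorial := by
    rw [Real.exp_eq_exp_ℝ, exp_eq_tsum_div]
  linarith [h, hexp]

lemma my_norm_pow (h1 : ‖(1 : A)‖ ≤ 1) (w : A) : ∀ n : ℕ, ‖w ^ n‖ ≤ ‖w‖ ^ n := by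
  intro n
  induction n with
  | zero => simpa using h1
  | succ k ih =>
      rw [pow_succ, pow_succ]
      calc ‖w ^ k * w‖ ≤ ‖w ^ k‖ * ‖w‖ := norm_mul_le _ _
        _ ≤ ‖w‖ ^ k * ‖w‖ := by
          exact mul_le_mul_of_nonneg_right ih (norm_nonneg w)

lemma exp_rem (h1 : ‖(1 : A)‖ ≤ 1) (w : A) (N : ℕ) :
    ‖exp w - ∑ n ∈ Finset.range N, (n.factorial⁻¹ : ℂ) • w ^ n‖
      ≤ Real.exp ‖w‖ - ∑ n ∈ Finset.range N, ‖w‖ ^ n / n.factorial := by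
  have hs : Summable (fun n : ℕ => (n.factorial⁻¹ : ℂ) • w ^ n) := expSeries_summable' w
  have hb : ∀ n : ℕ, ‖((n.factorial⁻¹ : ℂ)) • w ^ n‖ ≤ ‖w‖ ^ n / n.factorial := by
    intro n
    rw [norm_smul]
    have h2 : ‖((n.factorial⁻¹ : ℂ))‖ = ((n.factorial : ℝ))⁻¹ := by
      rw [norm_inv]; simp
    rw [h2, div_eq_inv_mul]
    exact mul_le_mul_of_nonneg_left (my_norm_pow h1 w n) (by positivity)
  have hns : Summable (fun n : ℕ => ‖((n.factorial⁻¹ : ℂ)) • w ^ n‖) :=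
    norm_expSeries_summable' w
  have hd : exp w - ∑ n ∈ Finset.range N, (n.factorial⁻¹ : ℂ) • w ^ n
      = ∑' n : ℕ, (((n + N).factorial⁻¹ : ℂ)) • w ^ (n + N) := by
    have h := Summable.sum_add_tsum_nat_add N hs
    rw [exp_eq_tsum ℂ]
    simp only at h ⊢
    linear_combination (norm := abel) -h
  rw [hd, real_exp_tail]
  have hns2 : Summable (fun n : ℕ => ‖(((n + N).factorial⁻¹ : ℂ)) • w ^ (n + N)‖) :=
    (summable_nat_add_iff (f := fun n : ℕ => ‖((n.factorial⁻¹ : ℂ)) • w ^ n‖) N).2 hns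
  calc ‖∑' n : ℕ, (((n + N).factorial⁻¹ : ℂ)) • w ^ (n + N)‖
      ≤ ∑' n : ℕ, ‖(((n + N).factorial⁻¹ : ℂ)) • w ^ (n + N)‖ :=
        norm_tsum_le_tsum_norm hns2
    _ ≤ ∑' n : ℕ, ‖w‖ ^ (n + N) / (n + N).factorial := by
        refine Summable.tsum_le_tsum (fun n => hb (n + N)) hns2 ?_
        exact (summable_nat_add_iff (f := fun n : ℕ => ‖w‖ ^ n / n.factorial) N).2
          (Real.summable_pow_div_factorial ‖w‖)


-- tail bound on ℝ (copied deps from a.lean assumed present when merged)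
lemma real_exp_tail' (x : ℝ) (N : ℕ) :
    Real.exp x - ∑ n ∈ Finset.range N, x ^ n / n.factorial
      = ∑' n : ℕ, x ^ (n + N) / (n + N).factorial := by
  have hs : Summable (fun n : ℕ => x ^ n / n.factorial) := Real.summable_pow_div_factorial x
  have h := Summable.sum_add_tsum_nat_add N hs
  have hexp : Real.exp x = ∑' n : ℕ, x ^ n / n.factorial := by
    rw [Real.exp_eq_exp_ℝ, exp_eq_tsum_div]
  linarith [h, hexp]

lemma E3_repr (x : ℝ) :
    Real.exp x - 1 - x - x ^ 2 / 2 = ∑' n : ℕ, x ^ (n + 3) / (n + 3).factorial := by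
  have h := real_exp_tail' x 3
  have hsum3 : ∑ n ∈ Finset.range 3, x ^ n / (n.factorial : ℝ) = 1 + x + x ^ 2 / 2 := by
    norm_num [Finset.sum_range_succ, Nat.factorial]
  rw [hsum3] at h
  linarith [h]

lemma E3_nonneg {x : ℝ} (hx : 0 ≤ x) : 0 ≤ Real.exp x - 1 - x - x ^ 2 / 2 := by
  rw [E3_repr]
  exact tsum_nonneg fun n => by positivity

lemma E3_le {x : ℝ} (hx : 0 ≤ x) :
    Real.exp x - 1 - x - x ^ 2 / 2 ≤ x ^ 3 * Real.exp x / 6 := by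
  rw [E3_repr]
  have hsum : Summable (fun n : ℕ => x ^ 3 * (x ^ n / n.factorial) / 6) :=
    ((Real.summable_pow_div_factorial x).mul_left (x ^ 3)).div_const 6
  have hsum2 : Summable (fun n : ℕ => x ^ (n + 3) / (n + 3).factorial) :=
    (summable_nat_add_iff (f := fun n : ℕ => x ^ n / n.factorial) 3).2
      (Real.summable_pow_div_factorial x)
  calc (∑' n : ℕ, x ^ (n + 3) / (n + 3).factorial)
      ≤ ∑' n : ℕ, x ^ 3 * (x ^ n / n.factorial) / 6 := by
        refine Summable.tsum_le_tsum (fun n => ?_) hsum2 hsum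
        have hfact : (6 : ℝ) * n.factorial ≤ (n + 3).factorial := by
          have h1 : (n + 3).factorial = (n + 3) * ((n + 2) * ((n + 1) * n.factorial)) := by
            simp [Nat.factorial]
          have h0f : (0:ℝ) ≤ n.factorial := Nat.cast_nonneg _
          have h3 : (6:ℝ) ≤ ((n:ℝ) + 3) * (((n:ℝ) + 2) * ((n:ℝ) + 1)) := by
            nlinarith [Nat.cast_nonneg (α := ℝ) n, sq_nonneg ((n:ℝ)),
              mul_nonneg (mul_nonneg (Nat.cast_nonneg (α := ℝ) n) (Nat.cast_nonneg (α := ℝ) n))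
                (Nat.cast_nonneg (α := ℝ) n)]
          rw [h1]
          push_cast
          calc (6:ℝ) * n.factorial
              ≤ (((n:ℝ) + 3) * (((n:ℝ) + 2) * ((n:ℝ) + 1))) * n.factorial :=
                mul_le_mul_of_nonneg_right h3 h0f
            _ = ((n:ℝ) + 3) * (((n:ℝ) + 2) * (((n:ℝ) + 1) * n.factorial)) := by ring
        have hp : x ^ (n + 3) = x ^ 3 * x ^ n := by ring
        have hnf : (0:ℝ) < n.factorial := by exact_mod_cast Nat.factorial_pos n
        calc x ^ (n + 3) / ((n + 3).factorial : ℝ)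
            = x ^ 3 * x ^ n / ((n + 3).factorial : ℝ) := by rw [hp]
          _ ≤ x ^ 3 * x ^ n / (6 * (n.factorial : ℝ)) := by
              have hnf3 : (0:ℝ) < ((n + 3).factorial : ℝ) := by
                exact_mod_cast Nat.factorial_pos (n + 3)
              rw [div_le_div_iff₀ hnf3 (by positivity)]
              exact mul_le_mul_of_nonneg_left hfact (by positivity)
          _ = x ^ 3 * (x ^ n / n.factorial) / 6 := by
              ring
    _ = x ^ 3 * Real.exp x / 6 := by
        rw [tsum_div_const, tsum_mul_left]
        congr 1
        rw [Real.exp_eq_exp_ℝ, exp_eq_tsum_div]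

section Ops
variable {X : Type*} [NormedAddCommGroup X] [NormedSpace ℂ X] [CompleteSpace X]
local notation "O" => X →L[ℂ] X

noncomputable def qq : List O → O
  | [] => 0
  | B :: l => B * l.sum + (2:ℝ)⁻¹ • (B * B) + qq l

lemma list_norm_sum_le (l : List O) : ‖l.sum‖ ≤ (l.map norm).sum := by
  induction l with
  | nil => simp
  | cons B l ih =>
      simp only [List.sum_cons, List.map_cons]
      exact (norm_add_le _ _).trans (by gcongr)

lemma qq_norm (l : List O) : ‖qq l‖ ≤ ((l.map norm).sum) ^ 2 / 2 := by
  induction l with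
  | nil => simp [qq]
  | cons B l ih =>
      have hS := list_norm_sum_le l
      have h0 : (0:ℝ) ≤ (l.map norm).sum :=
        List.sum_nonneg fun x hx => by
          rcases List.mem_map.1 hx with ⟨a, _, rfl⟩; exact norm_nonneg a
      have hB : (0:ℝ) ≤ ‖B‖ := norm_nonneg _
      calc ‖qq (B :: l)‖ ≤ ‖B * l.sum‖ + ‖(2:ℝ)⁻¹ • (B * B)‖ + ‖qq l‖ := by
            exact (norm_add_le _ _).trans (by gcongr; exact norm_add_le _ _)
        _ ≤ ‖B‖ * (l.map norm).sum + (2:ℝ)⁻¹ * (‖B‖ * ‖B‖) + ((l.map norm).sum)^2/2 := by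
            gcongr
            · exact (norm_mul_le _ _).trans (by gcongr)
            · calc ‖(2:ℝ)⁻¹ • (B * B)‖ = (2:ℝ)⁻¹ * ‖B * B‖ := by
                    rw [norm_smul (2:ℝ)⁻¹ (B*B)]; simp
                _ ≤ (2:ℝ)⁻¹ * (‖B‖ * ‖B‖) := by
                    have := norm_mul_le B B; nlinarith
        _ ≤ ((List.map norm (B :: l)).sum) ^ 2 / 2 := by
            simp only [List.map_cons, List.sum_cons]
            nlinarith [sq_nonneg (‖B‖ - (l.map norm).sum)]

lemma qq_append (l : List O) (B : O) :
    qq (l ++ [B]) = qq l + l.sum * B + (2:ℝ)⁻¹ • (B * B) := by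
  induction l with
  | nil => simp [qq]
  | cons C l ih =>
      rw [List.cons_append]
      show C * (l ++ [B]).sum + (2:ℝ)⁻¹ • (C * C) + qq (l ++ [B]) = _
      rw [ih, List.sum_append]
      show _ = (C * l.sum + (2:ℝ)⁻¹ • (C * C) + qq l) + (C :: l).sum * B + (2:ℝ)⁻¹ • (B * B)
      simp only [List.sum_cons, List.sum_nil, add_zero, mul_add, add_mul]
      abel

lemma qq_reverse (l : List O) : qq l + qq l.reverse = l.sum * l.sum := by
  induction l with
  | nil => simp [qq]
  | cons B l ih =>
      simp only [qq, List.reverse_cons, qq_append, List.sum_reverse, List.sum_cons, add_mul,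
        mul_add]
      linear_combination (norm := module) ih


lemma one_norm : ‖(1 : O)‖ ≤ 1 := ContinuousLinearMap.norm_id_le

lemma exp_norm_le (w : O) : ‖exp w‖ ≤ Real.exp ‖w‖ := by
  have h := exp_rem one_norm w 0
  simpa using h

lemma exp_rem1 (w : O) : ‖exp w - 1‖ ≤ Real.exp ‖w‖ - 1 := by
  have h := exp_rem one_norm w 1
  simpa [Finset.sum_range_succ, Nat.factorial] using h

lemma exp_rem2 (w : O) : ‖exp w - 1 - w‖ ≤ Real.exp ‖w‖ - 1 - ‖w‖ := by
  have h := exp_rem one_norm w 2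
  have hsA : ∑ n ∈ Finset.range 2, ((n.factorial : ℂ))⁻¹ • w ^ n = 1 + w := by
    rw [Finset.sum_range_succ, Finset.sum_range_succ, Finset.sum_range_zero]
    simp [Nat.factorial]
  have hsB : ∑ n ∈ Finset.range 2, ‖w‖ ^ n / (n.factorial : ℝ) = 1 + ‖w‖ := by
    norm_num [Finset.sum_range_succ, Nat.factorial]
  rw [hsA, hsB] at h
  have he : exp w - 1 - w = exp w - (1 + w) := by abel
  rw [he]
  linarith [h]

lemma exp_rem3 (w : O) :
    ‖exp w - 1 - w - (2:ℝ)⁻¹ • (w * w)‖ ≤ Real.exp ‖w‖ - 1 - ‖w‖ - ‖w‖ ^ 2 / 2 := by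
  have h := exp_rem one_norm w 3
  have hsum : ∑ n ∈ Finset.range 3, ((n.factorial : ℂ))⁻¹ • w ^ n
      = 1 + w + (2:ℝ)⁻¹ • (w * w) := by
    have h2 : (((2:ℕ).factorial : ℂ))⁻¹ • w ^ 2 = (2:ℝ)⁻¹ • (w * w) := by
      rw [sq]
      rw [show (((2:ℕ).factorial : ℂ))⁻¹ = (((2:ℝ)⁻¹ : ℝ) : ℂ) by norm_num [Nat.factorial],
        Complex.coe_smul]
    rw [Finset.sum_range_succ, Finset.sum_range_succ, Finset.sum_range_succ,
      Finset.sum_range_zero, h2]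
    simp [Nat.factorial]
  have hsum2 : ∑ n ∈ Finset.range 3, ‖w‖ ^ n / (n.factorial : ℝ) = 1 + ‖w‖ + ‖w‖ ^ 2 / 2 := by
    norm_num [Finset.sum_range_succ, Nat.factorial]
  rw [hsum, hsum2] at h
  have he : exp w - 1 - w - (2:ℝ)⁻¹ • (w * w) = exp w - (1 + w + (2:ℝ)⁻¹ • (w * w)) := by
    abel
  rw [he]
  linarith [h]

lemma prod_norm_le (t : ℝ) (l : List O) :
    ‖(l.map fun B => exp (t • B)).prod‖ ≤ Real.exp ((l.map norm).sum * |t|) := by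
  induction l with
  | nil => simpa using one_norm
  | cons B l ih =>
      simp only [List.map_cons, List.prod_cons, List.sum_cons]
      calc ‖exp (t • B) * (l.map fun B => exp (t • B)).prod‖
          ≤ ‖exp (t • B)‖ * ‖(l.map fun B => exp (t • B)).prod‖ := norm_mul_le _ _
        _ ≤ Real.exp ‖t • B‖ * Real.exp ((l.map norm).sum * |t|) := by
            exact mul_le_mul (exp_norm_le _) ih (norm_nonneg _) (Real.exp_nonneg _)
        _ = Real.exp (‖t • B‖ + (l.map norm).sum * |t|) := (Real.exp_add _ _).symm
        _ ≤ Real.exp ((‖B‖ + (l.map norm).sum) * |t|) := by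
            rw [Real.exp_le_exp, norm_smul t B, Real.norm_eq_abs]
            nlinarith [abs_nonneg t]

set_option maxHeartbeats 1000000 in
lemma prod_exp_rem (t : ℝ) (l : List O) :
    ‖(l.map fun B => exp (t • B)).prod - (1 + t • l.sum + (t ^ 2) • qq l)‖
      ≤ Real.exp ((l.map norm).sum * |t|) - 1 - (l.map norm).sum * |t|
        - ((l.map norm).sum * |t|) ^ 2 / 2 := by
  induction l with
  | nil => simp [qq]
  | cons B l ih =>
      simp only [List.map_cons, List.prod_cons, List.sum_cons]
      set E : O := exp (t • B) with hE
      set P : O := (l.map fun B => exp (t • B)).prod with hP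
      set S : O := l.sum with hS
      set Q : O := qq l with hQ
      have hσ0 : (0:ℝ) ≤ (l.map norm).sum :=
        List.sum_nonneg fun x hx => by
          rcases List.mem_map.1 hx with ⟨a, _, rfl⟩; exact norm_nonneg a
      set σ : ℝ := (l.map norm).sum with hσ
      set b : ℝ := ‖B‖ with hb
      have hb0 : (0:ℝ) ≤ b := norm_nonneg _
      have hqB : qq (B :: l) = B * S + (2:ℝ)⁻¹ • (B * B) + Q := rfl
      have key : E * P - (1 + t • (B + S) + (t ^ 2) • qq (B :: l))
          = E * (P - (1 + t • S + (t ^ 2) • Q))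
            + (E - 1 - t • B - (2:ℝ)⁻¹ • ((t • B) * (t • B)))
            + t • ((E - 1 - t • B) * S)
            + (t ^ 2) • ((E - 1) * Q) := by
        rw [hqB]
        simp only [mul_add, mul_sub, sub_mul, add_mul, mul_one, one_mul,
          smul_add, smul_sub, mul_smul_comm, smul_mul_assoc, smul_smul]
        module
      rw [key]
      have hwB : ‖t • B‖ = b * |t| := by rw [norm_smul t B, Real.norm_eq_abs, hb]; ring
      have n1 : ‖E * (P - (1 + t • S + (t ^ 2) • Q))‖
          ≤ Real.exp (b * |t|) * (Real.exp (σ * |t|) - 1 - σ * |t| - (σ * |t|) ^ 2 / 2) := by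
        calc ‖E * (P - (1 + t • S + (t ^ 2) • Q))‖
            ≤ ‖E‖ * ‖P - (1 + t • S + (t ^ 2) • Q)‖ := norm_mul_le _ _
          _ ≤ Real.exp (b * |t|) * (Real.exp (σ * |t|) - 1 - σ * |t| - (σ * |t|) ^ 2 / 2) := by
              apply mul_le_mul _ ih (norm_nonneg _) (Real.exp_nonneg _)
              · rw [← hwB]; exact exp_norm_le _
      have n2 : ‖E - 1 - t • B - (2:ℝ)⁻¹ • ((t • B) * (t • B))‖
          ≤ Real.exp (b * |t|) - 1 - b * |t| - (b * |t|) ^ 2 / 2 := by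
        have := exp_rem3 (t • B)
        rwa [hwB] at this
      have hSn : ‖S‖ ≤ σ := list_norm_sum_le l
      have hQn : ‖Q‖ ≤ σ ^ 2 / 2 := qq_norm l
      have n3 : ‖t • ((E - 1 - t • B) * S)‖
          ≤ σ * |t| * (Real.exp (b * |t|) - 1 - b * |t|) := by
        have h1 : ‖(E - 1 - t • B) * S‖ ≤ (Real.exp (b * |t|) - 1 - b * |t|) * σ := by
          calc ‖(E - 1 - t • B) * S‖ ≤ ‖E - 1 - t • B‖ * ‖S‖ := norm_mul_le _ _
            _ ≤ (Real.exp (b * |t|) - 1 - b * |t|) * σ := by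
                apply mul_le_mul _ hSn (norm_nonneg _) _
                · have := exp_rem2 (t • B); rwa [hwB] at this
                · nlinarith [Real.add_one_le_exp (b * |t|)]
        rw [norm_smul t ((E - 1 - t • B) * S), Real.norm_eq_abs]
        nlinarith [abs_nonneg t, h1, norm_nonneg ((E - 1 - t • B) * S)]
      have n4 : ‖(t ^ 2) • ((E - 1) * Q)‖
          ≤ (σ * |t|) ^ 2 / 2 * (Real.exp (b * |t|) - 1) := by
        have h1 : ‖(E - 1) * Q‖ ≤ (Real.exp (b * |t|) - 1) * (σ ^ 2 / 2) := by
          calc ‖(E - 1) * Q‖ ≤ ‖E - 1‖ * ‖Q‖ := norm_mul_le _ _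
            _ ≤ (Real.exp (b * |t|) - 1) * (σ ^ 2 / 2) := by
                apply mul_le_mul _ hQn (norm_nonneg _) _
                · have := exp_rem1 (t • B); rwa [hwB] at this
                · nlinarith [Real.add_one_le_exp (b * |t|), mul_nonneg hb0 (abs_nonneg t)]
        rw [norm_smul (t ^ 2) ((E - 1) * Q), Real.norm_eq_abs, abs_pow]
        nlinarith [abs_nonneg t, h1, norm_nonneg ((E - 1) * Q), sq_nonneg (|t|),
          Real.add_one_le_exp (b * |t|)]
      have tri : ‖E * (P - (1 + t • S + (t ^ 2) • Q))
            + (E - 1 - t • B - (2:ℝ)⁻¹ • ((t • B) * (t • B)))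
            + t • ((E - 1 - t • B) * S)
            + (t ^ 2) • ((E - 1) * Q)‖
          ≤ ‖E * (P - (1 + t • S + (t ^ 2) • Q))‖
            + ‖E - 1 - t • B - (2:ℝ)⁻¹ • ((t • B) * (t • B))‖
            + ‖t • ((E - 1 - t • B) * S)‖
            + ‖(t ^ 2) • ((E - 1) * Q)‖ := by
        calc ‖_ + _ + _ + _‖ ≤ _ := norm_add_le _ _
          _ ≤ _ := add_le_add_left (norm_add_le _ _) _
          _ ≤ _ := add_le_add_left (add_le_add_left (norm_add_le _ _) _) _
      have hid : Real.exp (b * |t|) * (Real.exp (σ * |t|) - 1 - σ * |t| - (σ * |t|) ^ 2 / 2)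
            + (Real.exp (b * |t|) - 1 - b * |t| - (b * |t|) ^ 2 / 2)
            + σ * |t| * (Real.exp (b * |t|) - 1 - b * |t|)
            + (σ * |t|) ^ 2 / 2 * (Real.exp (b * |t|) - 1)
          = Real.exp ((b + σ) * |t|) - 1 - (b + σ) * |t| - ((b + σ) * |t|) ^ 2 / 2 := by
        rw [show (b + σ) * |t| = b * |t| + σ * |t| from by ring, Real.exp_add]
        ring
      linarith [tri, n1, n2, n3, n4, hid]

end Ops

set_option maxHeartbeats 4000000 in
/-- Third-order local error bound for the symmetric (Strang) Trotter splitting: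
there is an absolute constant `C > 0` such that for bounded operators
`L₁, …, L_m` with `‖Lⱼ‖ ≤ Λ`, the symmetrized product formula
`S₂(λ) = (∏ⱼ e^{(λ/2)Lⱼ})(∏ⱼ reversed e^{(λ/2)Lⱼ})` satisfies
`‖e^{λ ΣLⱼ} − S₂(λ)‖ ≤ C (mΛ|λ|)³ e^{mΛ|λ|}`. -/
theorem strang_splitting_third_order :
    ∃ C : ℝ, 0 < C ∧
      ∀ (X : Type) [NormedAddCommGroup X] [NormedSpace ℂ X] [CompleteSpace X]
        (m : ℕ) (L : Fin m → (X →L[ℂ] X)) (Λ : ℝ)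
        (_ : ∀ j, ‖L j‖ ≤ Λ) (lam : ℝ),
        ‖exp (lam • ∑ j, L j) -
            ((List.ofFn fun j : Fin m => exp ((lam / 2) • L j)).prod *
             (List.ofFn fun j : Fin m => exp ((lam / 2) • L j)).reverse.prod)‖ ≤
          C * ((m : ℝ) * Λ * |lam|) ^ 3 * Real.exp ((m : ℝ) * Λ * |lam|) := by
  refine ⟨1, one_pos, ?_⟩
  intro X _ _ _ m L Λ hL lam
  classical
  set t : ℝ := lam / 2 with ht
  set l : List (X →L[ℂ] X) := List.ofFn L with hl
  have hmap : (List.ofFn fun j : Fin m => exp ((lam / 2) • L j))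
      = l.map (fun B => exp (t • B)) := by
    rw [hl, List.map_ofFn]
    rfl
  have hsum : (∑ j, L j) = l.sum := by rw [hl, List.sum_ofFn]
  rw [hmap, hsum, ← List.map_reverse]
  set s : ℝ := (l.map norm).sum with hs
  have hs0 : 0 ≤ s :=
    List.sum_nonneg fun r hr => by
      rcases List.mem_map.1 hr with ⟨a, _, rfl⟩; exact norm_nonneg a
  have hsm : s ≤ (m : ℝ) * Λ := by
    rw [hs, hl, List.map_ofFn]
    rw [List.sum_ofFn]
    calc (∑ j : Fin m, ‖L j‖) ≤ ∑ _j : Fin m, Λ := Finset.sum_le_sum fun j _ => hL j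
      _ = (m : ℝ) * Λ := by simp [Finset.sum_const, Finset.card_univ, nsmul_eq_mul]
  set y : ℝ := (m : ℝ) * Λ * |lam| with hy
  set x : ℝ := s * |t| with hx
  have hx0 : 0 ≤ x := mul_nonneg hs0 (abs_nonneg t)
  have hteq : |t| = |lam| / 2 := by rw [ht, abs_div]; norm_num
  have hx2y : 2 * x ≤ y := by
    rw [hx, hy, hteq]
    have := mul_le_mul_of_nonneg_right hsm (abs_nonneg lam)
    nlinarith [this]
  have hy0 : 0 ≤ y := le_trans (by linarith) hx2y
  -- notation
  set u : X →L[ℂ] X := (l.map fun B => exp (t • B)).prod with hu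
  set v : X →L[ℂ] X := (l.reverse.map fun B => exp (t • B)).prod with hv
  set S : X →L[ℂ] X := l.sum with hS
  set Q1 : X →L[ℂ] X := qq l with hQ1
  set Q2 : X →L[ℂ] X := qq l.reverse with hQ2
  set X1 : X →L[ℂ] X := 1 + t • S + (t ^ 2) • Q1 with hX1
  set X2 : X →L[ℂ] X := 1 + t • l.reverse.sum + (t ^ 2) • Q2 with hX2
  have hrevnorm : (l.reverse.map norm).sum = s := by
    rw [List.map_reverse, List.sum_reverse, hs]
  have hrevsum : l.reverse.sum = S := by rw [List.sum_reverse, hS]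
  have hQr : Q1 + Q2 = S * S := qq_reverse l
  have hE3x := prod_exp_rem t l
  have hE3x' := prod_exp_rem t l.reverse
  rw [hrevnorm] at hE3x'
  rw [← hx] at hE3x hE3x'
  have hvn : ‖v‖ ≤ Real.exp x := by
    have := prod_norm_le t l.reverse
    rwa [hrevnorm, ← hx] at this
  have hX1n : ‖X1‖ ≤ Real.exp x := by
    have h1 : ‖X1‖ ≤ 1 + x + x ^ 2 / 2 := by
      rw [hX1]
      calc ‖1 + t • S + (t ^ 2) • Q1‖ ≤ ‖1 + t • S‖ + ‖(t ^ 2) • Q1‖ := norm_add_le _ _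
        _ ≤ (‖(1 : X →L[ℂ] X)‖ + ‖t • S‖) + ‖(t ^ 2) • Q1‖ :=
            add_le_add_left (norm_add_le _ _) _
        _ ≤ (1 + x) + x ^ 2 / 2 := by
            have e1 : ‖t • S‖ = |t| * ‖S‖ := by rw [norm_smul t S, Real.norm_eq_abs]
            have e2 : ‖(t ^ 2) • Q1‖ = |t| ^ 2 * ‖Q1‖ := by
              rw [norm_smul (t ^ 2) Q1, Real.norm_eq_abs, abs_pow]
            have e3 : ‖S‖ ≤ s := list_norm_sum_le l
            have e4 : ‖Q1‖ ≤ s ^ 2 / 2 := qq_norm l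
            have e5 := one_norm (X := X)
            rw [e1, e2]
            have : |t| * ‖S‖ ≤ x := by
              rw [hx]; nlinarith [abs_nonneg t, norm_nonneg S]
            have h2 : |t| ^ 2 * ‖Q1‖ ≤ x ^ 2 / 2 := by
              rw [hx]
              nlinarith [abs_nonneg t, norm_nonneg Q1, sq_nonneg (|t|)]
            linarith
    have := E3_nonneg hx0
    linarith
  -- decomposition
  set w : X →L[ℂ] X := lam • S with hw
  have hwn : ‖w‖ ≤ 2 * x := by
    rw [hw, norm_smul lam S, Real.norm_eq_abs, hx, hteq]
    nlinarith [list_norm_sum_le l, abs_nonneg lam, hs0, norm_nonneg S]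
  have hlam : lam = 2 * t := by rw [ht]; ring
  have hmid : X1 * X2 - (1 + w + (2:ℝ)⁻¹ • (w * w))
      = (t ^ 3) • (S * Q2 + Q1 * S) + (t ^ 4) • (Q1 * Q2) := by
    rw [hX1, hX2, hrevsum, hw, hlam]
    simp only [mul_add, add_mul, mul_one, one_mul, smul_add, mul_smul_comm, smul_mul_assoc,
      smul_smul]
    rw [← hQr]
    simp only [mul_add, add_mul, smul_add]
    module
  have hmidn : ‖X1 * X2 - (1 + w + (2:ℝ)⁻¹ • (w * w))‖ ≤ x ^ 3 + x ^ 4 / 4 := by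
    rw [hmid]
    have e3 : ‖S‖ ≤ s := list_norm_sum_le l
    have e4 : ‖Q1‖ ≤ s ^ 2 / 2 := qq_norm l
    have e5 : ‖Q2‖ ≤ s ^ 2 / 2 := by have := qq_norm l.reverse; rwa [hrevnorm] at this
    calc ‖(t ^ 3) • (S * Q2 + Q1 * S) + (t ^ 4) • (Q1 * Q2)‖
        ≤ ‖(t ^ 3) • (S * Q2 + Q1 * S)‖ + ‖(t ^ 4) • (Q1 * Q2)‖ := norm_add_le _ _
      _ ≤ |t| ^ 3 * (s * (s ^ 2 / 2) + s ^ 2 / 2 * s) + |t| ^ 4 * (s ^ 2 / 2 * (s ^ 2 / 2)) := by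
          apply add_le_add
          · rw [norm_smul (t ^ 3) (S * Q2 + Q1 * S), Real.norm_eq_abs, abs_pow]
            apply mul_le_mul_of_nonneg_left _ (by positivity)
            calc ‖S * Q2 + Q1 * S‖ ≤ ‖S * Q2‖ + ‖Q1 * S‖ := norm_add_le _ _
              _ ≤ s * (s ^ 2 / 2) + s ^ 2 / 2 * s := by
                  apply add_le_add
                  · exact (norm_mul_le _ _).trans (by
                      apply mul_le_mul e3 e5 (norm_nonneg _) hs0)
                  · exact (norm_mul_le _ _).trans (by
                      apply mul_le_mul e4 e3 (norm_nonneg _) (by positivity))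
          · rw [norm_smul (t ^ 4) (Q1 * Q2), Real.norm_eq_abs, abs_pow]
            apply mul_le_mul_of_nonneg_left _ (by positivity)
            exact (norm_mul_le _ _).trans
              (mul_le_mul e4 e5 (norm_nonneg _) (by positivity))
      _ ≤ x ^ 3 + x ^ 4 / 4 := by
          rw [hx]
          have h1 : (s * |t|) ^ 3 = |t| ^ 3 * s ^ 3 := by ring
          have h2 : (s * |t|) ^ 4 = |t| ^ 4 * s ^ 4 := by ring
          nlinarith [abs_nonneg t, hs0, pow_nonneg (abs_nonneg t) 3,
            pow_nonneg (abs_nonneg t) 4, pow_nonneg hs0 3, pow_nonneg hs0 4]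
  have huvX : u * v - X1 * X2 = (u - X1) * v + X1 * (v - X2) := by noncomm_ring
  have huvn : ‖u * v - X1 * X2‖
      ≤ (Real.exp x - 1 - x - x ^ 2 / 2) * Real.exp x
        + Real.exp x * (Real.exp x - 1 - x - x ^ 2 / 2) := by
    rw [huvX]
    calc ‖(u - X1) * v + X1 * (v - X2)‖ ≤ ‖(u - X1) * v‖ + ‖X1 * (v - X2)‖ := norm_add_le _ _
      _ ≤ ‖u - X1‖ * ‖v‖ + ‖X1‖ * ‖v - X2‖ :=
          add_le_add (norm_mul_le _ _) (norm_mul_le _ _)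
      _ ≤ (Real.exp x - 1 - x - x ^ 2 / 2) * Real.exp x
            + Real.exp x * (Real.exp x - 1 - x - x ^ 2 / 2) := by
          apply add_le_add
          · exact mul_le_mul hE3x hvn (norm_nonneg _) (E3_nonneg hx0)
          · exact mul_le_mul hX1n hE3x' (norm_nonneg _) (Real.exp_nonneg _)
  have hdec : exp w - u * v
      = (exp w - 1 - w - (2:ℝ)⁻¹ • (w * w))
        - (X1 * X2 - (1 + w + (2:ℝ)⁻¹ • (w * w)))
        - (u * v - X1 * X2) := by abel
  have hA := exp_rem3 w
  -- numeric estimates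
  have hr0 : 0 ≤ ‖w‖ := norm_nonneg w
  have hry : ‖w‖ ≤ y := le_trans hwn hx2y
  have hxy : x ≤ y := by linarith
  have key1 : Real.exp ‖w‖ - 1 - ‖w‖ - ‖w‖ ^ 2 / 2 ≤ y ^ 3 * Real.exp y / 6 := by
    calc Real.exp ‖w‖ - 1 - ‖w‖ - ‖w‖ ^ 2 / 2 ≤ ‖w‖ ^ 3 * Real.exp ‖w‖ / 6 := E3_le hr0
      _ ≤ y ^ 3 * Real.exp y / 6 := by
          have := mul_le_mul (pow_le_pow_left₀ hr0 hry 3) (Real.exp_le_exp.2 hry)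
            (Real.exp_pos _).le (by positivity)
          linarith
  have key2 : (Real.exp x - 1 - x - x ^ 2 / 2) * Real.exp x
        + Real.exp x * (Real.exp x - 1 - x - x ^ 2 / 2) ≤ y ^ 3 * Real.exp y / 24 := by
    have h1 : Real.exp x - 1 - x - x ^ 2 / 2 ≤ x ^ 3 * Real.exp x / 6 := E3_le hx0
    have h2 : (Real.exp x - 1 - x - x ^ 2 / 2) * Real.exp x ≤ x ^ 3 * Real.exp x / 6 * Real.exp x :=
      mul_le_mul_of_nonneg_right h1 (Real.exp_pos _).le
    have h3 : x ^ 3 * Real.exp x / 6 * Real.exp x = x ^ 3 * (Real.exp x * Real.exp x) / 6 := by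
      ring
    have h4 : Real.exp x * Real.exp x = Real.exp (2 * x) := by
      rw [← Real.exp_add]; ring_nf
    have h5 : x ^ 3 * Real.exp (2 * x) ≤ y ^ 3 / 8 * Real.exp y := by
      have h6 : x ^ 3 ≤ y ^ 3 / 8 := by
        have := pow_le_pow_left₀ (by linarith : (0:ℝ) ≤ 2 * x) hx2y 3
        nlinarith [this]
      exact mul_le_mul h6 (Real.exp_le_exp.2 hx2y) (Real.exp_pos _).le (by positivity)
    nlinarith [h2, h3, h4, h5, Real.exp_pos x, E3_nonneg hx0]
  have key3 : x ^ 3 + x ^ 4 / 4 ≤ y ^ 3 * Real.exp y / 8 + y ^ 3 * Real.exp y / 64 := by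
    have h6 : x ^ 3 ≤ y ^ 3 / 8 := by
      have := pow_le_pow_left₀ (by linarith : (0:ℝ) ≤ 2 * x) hx2y 3
      nlinarith [this]
    have h7 : x ^ 4 ≤ y ^ 4 / 16 := by
      have := pow_le_pow_left₀ (by linarith : (0:ℝ) ≤ 2 * x) hx2y 4
      nlinarith [this]
    have h8 : 1 ≤ Real.exp y := Real.one_le_exp hy0
    have h9 : y ≤ Real.exp y := by nlinarith [Real.add_one_le_exp y]
    have h10 : y ^ 3 ≤ y ^ 3 * Real.exp y := by nlinarith [pow_nonneg hy0 3]
    have h11 : y ^ 4 ≤ y ^ 3 * Real.exp y := by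
      calc y ^ 4 = y ^ 3 * y := by ring
        _ ≤ y ^ 3 * Real.exp y := mul_le_mul_of_nonneg_left h9 (pow_nonneg hy0 3)
    linarith
  calc ‖exp w - u * v‖
      ≤ ‖exp w - 1 - w - (2:ℝ)⁻¹ • (w * w)‖
        + ‖X1 * X2 - (1 + w + (2:ℝ)⁻¹ • (w * w))‖
        + ‖u * v - X1 * X2‖ := by
        rw [hdec]
        calc ‖_ - _ - _‖ ≤ ‖_ - _‖ + ‖_‖ := norm_sub_le _ _
          _ ≤ _ := add_le_add_left (norm_sub_le _ _) _
    _ ≤ y ^ 3 * Real.exp y / 6 + (y ^ 3 * Real.exp y / 8 + y ^ 3 * Real.exp y / 64)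
          + y ^ 3 * Real.exp y / 24 := by
        have := le_trans hA key1
        linarith [this, le_trans hmidn key3, le_trans huvn key2]
    _ ≤ 1 * y ^ 3 * Real.exp y := by nlinarith [mul_nonneg (pow_nonneg hy0 3) (Real.exp_pos y).le]
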